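/- Let w, w' ∈ W lie in the same coset of W_J with parabolic factorizations w = u·x and w' = u·x' (u ∈ W^J, x, x' ∈ W_J, both factorizations length-additive, ℓ(x') = ℓ(x)). Then the Schubert structure constant satisfies c^{w'}_{u,x} = δ_{w',w}, equivalently ∂_{w'}(S_u S_x) = δ_{x,x'}. -/

import Mathlib

namespace SchubertAux

open List CoxeterSystem

set_option linter.unusedSectionVars false

private lemma z2 : ∀ e : ZMod 2, e + 1 + 1 = e := by decide

variable {B W : Type*} [Group W] [DecidableEq W]

/-- The Bourbaki permutation of `W × ZMod 2` attached to an element `c`. -/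
def myPerm (c : W) : Equiv.Perm (W × ZMod 2) where
  toFun p := (c * p.1 * c⁻¹, p.2 + if p.1 = c then 1 else 0)
  invFun p := (c⁻¹ * p.1 * c, p.2 + if p.1 = c then 1 else 0)
  left_inv p := by
    obtain ⟨t, e⟩ := p
    have h : c * t * c⁻¹ = c ↔ t = c := by
      constructor
      · intro h; have := congrArg (fun z => c⁻¹ * z * c) h; simpa [mul_assoc] using this
      · rintro rfl; simp
    refine Prod.ext ?_ ?_
    · simp [mul_assoc]
    · simp only [h]
      by_cases ht : t = c
      · simp [ht, z2 e]
      · simp [ht]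
  right_inv p := by
    obtain ⟨t, e⟩ := p
    have h : c⁻¹ * t * c = c ↔ t = c := by
      constructor
      · intro h; have := congrArg (fun z => c * z * c⁻¹) h; simpa [mul_assoc] using this
      · rintro rfl; simp
    refine Prod.ext ?_ ?_
    · simp [mul_assoc]
    · simp only [h]
      by_cases ht : t = c
      · simp [ht, z2 e]
      · simp [ht]

lemma myPerm_apply (c : W) (p : W × ZMod 2) :
    myPerm c p = (c * p.1 * c⁻¹, p.2 + if p.1 = c then 1 else 0) := rfl

lemma inv_eq_self {a : W} (ha : a * a = 1) : a⁻¹ = a := by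
  have := congrArg (fun z => a⁻¹ * z) ha
  simpa [mul_assoc] using this.symm

lemma conj_q {a b : W} (ha : a * a = 1) (hb : b * b = 1) (r : ℕ) :
    ((a * b)⁻¹ * ((b * a) ^ r * b) * (a * b)) = (b * a) ^ (r + 2) * b := by
  rw [show r + 2 = 1 + r + 1 by omega, pow_add, pow_add, pow_one, mul_inv_rev,
    inv_eq_self ha, inv_eq_self hb]
  simp only [mul_assoc]

lemma conj_eq_iff (g x y : W) : (g * x * g⁻¹ = y) ↔ (x = g⁻¹ * y * g) := by
  constructor
  · intro h; rw [← h]; group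
  · intro h; rw [h]; group

lemma myPerm_mul_pow {a b : W} (ha : a * a = 1) (hb : b * b = 1) (k : ℕ) (p : W × ZMod 2) :
    ((myPerm a * myPerm b) ^ k) p =
      ((a * b) ^ k * p.1 * ((a * b) ^ k)⁻¹,
        p.2 + ∑ r ∈ Finset.range (2 * k), if p.1 = (b * a) ^ r * b then 1 else 0) := by
  induction k generalizing p with
  | zero => simp
  | succ k ih =>
    rw [pow_succ, Equiv.Perm.mul_apply]
    have h1 : (myPerm a * myPerm b) p
        = ((a * b) * p.1 * (a * b)⁻¹,
            p.2 + ((if p.1 = (b * a) ^ 0 * b then 1 else 0)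
                 + (if p.1 = (b * a) ^ 1 * b then 1 else 0))) := by
      rw [Equiv.Perm.mul_apply, myPerm_apply, myPerm_apply]
      refine Prod.ext ?_ ?_
      · simp [mul_assoc, mul_inv_rev]
      · simp only [add_assoc]
        congr 1
        congr 1
        · simp [inv_eq_self hb]
        · congr 1
          have h2 : (b * p.1 * b⁻¹ = a) ↔ (p.1 = (b * a) ^ 1 * b) := by
            rw [pow_one, conj_eq_iff, inv_eq_self hb]
          simp [h2]
    rw [h1, ih]
    refine Prod.ext ?_ ?_
    · simp only
      rw [pow_succ]
      group
    · simp only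
      rw [add_assoc]
      congr 1
      have hsum : (∑ r ∈ Finset.range (2 * k),
          if (a * b) * p.1 * (a * b)⁻¹ = (b * a) ^ r * b then (1 : ZMod 2) else 0)
          = ∑ r ∈ Finset.range (2 * k), if p.1 = (b * a) ^ (r + 2) * b then 1 else 0 := by
        refine Finset.sum_congr rfl fun r _ => ?_
        simp only [conj_eq_iff, conj_q ha hb]
      rw [hsum]
      rw [show 2 * (k + 1) = 2 * k + 1 + 1 by omega]
      rw [Finset.sum_range_succ', Finset.sum_range_succ']
      simp only [Nat.add_assoc, Nat.zero_add]
      norm_num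
      ring

variable {M : CoxeterMatrix B} (cs : CoxeterSystem M W)

lemma liftable : M.IsLiftable (fun i => myPerm (cs.simple i)) := by
  intro i j
  rcases Nat.eq_zero_or_pos (M i j) with h | h
  · rw [h, pow_zero]
  · set m := M i j with hm
    apply Equiv.ext
    intro p
    rw [myPerm_mul_pow (cs.simple_mul_simple_self i) (cs.simple_mul_simple_self j)]
    have hab : (cs.simple i * cs.simple j) ^ m = 1 := cs.simple_mul_simple_pow i j
    have hba : (cs.simple j * cs.simple i) ^ m = 1 := cs.simple_mul_simple_pow' i j
    rw [hab]
    have hsum : (∑ r ∈ Finset.range (2 * m),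
        if p.1 = (cs.simple j * cs.simple i) ^ r * cs.simple j then (1 : ZMod 2) else 0) = 0 := by
      rw [two_mul, Finset.sum_range_add]
      have : ∀ r : ℕ, (cs.simple j * cs.simple i) ^ (m + r) = (cs.simple j * cs.simple i) ^ r := by
        intro r; rw [pow_add, hba, one_mul]
      simp only [this]
      have h2 : ∀ e : ZMod 2, e + e = 0 := by decide
      exact h2 _
    rw [hsum]
    simp

/-- The Bourbaki homomorphism from `W` to permutations of `W × ZMod 2`. -/
noncomputable def phi : W →* Equiv.Perm (W × ZMod 2) :=
  cs.lift ⟨fun i => myPerm (cs.simple i), liftable cs⟩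

lemma phi_simple (i : B) : phi cs (cs.simple i) = myPerm (cs.simple i) :=
  cs.lift_apply_simple (liftable cs) i

lemma phi_wordProd (ω : List B) (p : W × ZMod 2) :
    phi cs (cs.wordProd ω) p =
      (cs.wordProd ω * p.1 * (cs.wordProd ω)⁻¹,
        p.2 + ((cs.rightInvSeq ω).count p.1 : ZMod 2)) := by
  induction ω generalizing p with
  | nil => simp [cs.wordProd_nil]
  | cons i ω ih =>
    rw [cs.wordProd_cons, map_mul, Equiv.Perm.mul_apply, ih, phi_simple, myPerm_apply]
    refine Prod.ext ?_ ?_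
    · simp [mul_assoc]
    · show _ + _ = _
      have hris : cs.rightInvSeq (i :: ω)
          = ((cs.wordProd ω)⁻¹ * cs.simple i * cs.wordProd ω) :: cs.rightInvSeq ω := rfl
      rw [hris, List.count_cons]
      have hcond : (cs.wordProd ω * p.1 * (cs.wordProd ω)⁻¹ = cs.simple i)
          ↔ ((cs.wordProd ω)⁻¹ * cs.simple i * cs.wordProd ω = p.1) := by
        constructor
        · intro h; rw [← h]; group
        · intro h; rw [← h]; group
      by_cases hc : (cs.wordProd ω)⁻¹ * cs.simple i * cs.wordProd ω = p.1
      · simp [hc, hcond, add_assoc]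
      · simp [hc, hcond]

/-- The parity of the number of occurrences of `t` in the right inversion sequence
depends only on the product of the word. -/
lemma count_parity (ω₁ ω₂ : List B) (h : cs.wordProd ω₁ = cs.wordProd ω₂) (t : W) :
    (((cs.rightInvSeq ω₁).count t : ZMod 2)) = ((cs.rightInvSeq ω₂).count t : ZMod 2) := by
  have e1 := phi_wordProd cs ω₁ (t, 0)
  have e2 := phi_wordProd cs ω₂ (t, 0)
  have key : phi cs (cs.wordProd ω₁) (t, 0) = phi cs (cs.wordProd ω₂) (t, 0) := by rw [h]
  rw [e1, e2] at key
  have := congrArg Prod.snd key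
  simpa using this

/-- If `s i` is a right descent of `π ω`, then `s i` occurs an odd number of times
in the right inversion sequence of `ω`. -/
lemma count_odd (ω : List B) (i : B)
    (h : cs.length (cs.wordProd ω * cs.simple i) < cs.length (cs.wordProd ω)) :
    (((cs.rightInvSeq ω).count (cs.simple i) : ZMod 2)) = 1 := by
  obtain ⟨ω', hred, hw⟩ := cs.exists_reduced_word' (cs.wordProd ω * cs.simple i)
  have hprod : cs.wordProd (ω'.concat i) = cs.wordProd ω := by
    rw [cs.wordProd_concat, ← hw, mul_assoc, cs.simple_mul_simple_self, mul_one]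
  rw [← count_parity cs (ω'.concat i) ω hprod]
  rw [cs.rightInvSeq_concat]
  have hnotmem : cs.simple i ∉ cs.rightInvSeq ω' := by
    intro hmem
    have := (cs.isRightInversion_of_mem_rightInvSeq hred hmem).2
    rw [← hw, mul_assoc, cs.simple_mul_simple_self, mul_one] at this
    omega
  have hcount0 : (List.map (⇑(MulAut.conj (cs.simple i))) (cs.rightInvSeq ω')).count
      (cs.simple i) = 0 := by
    rw [List.count_eq_zero]
    intro hmem
    obtain ⟨t, ht, hconj⟩ := List.mem_map.mp hmem
    apply hnotmem
    have : t = cs.simple i := by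
      have := congrArg (fun z => (cs.simple i)⁻¹ * z * cs.simple i) hconj
      simpa [MulAut.conj, mul_assoc] using this
    rwa [← this]
  rw [List.concat_eq_append, List.count_append, hcount0]
  simp

/-- Exchange property (for arbitrary words). -/
lemma exchange {ω : List B} {i : B}
    (h : cs.length (cs.wordProd ω * cs.simple i) < cs.length (cs.wordProd ω)) :
    ∃ j < ω.length, cs.wordProd (ω.eraseIdx j) = cs.wordProd ω * cs.simple i := by
  have hodd := count_odd cs ω i h
  have hmem : cs.simple i ∈ cs.rightInvSeq ω := by
    by_contra hnot
    rw [List.count_eq_zero.mpr hnot] at hodd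
    simp at hodd
  obtain ⟨j, hj, hget⟩ := List.mem_iff_getElem.mp hmem
  rw [cs.length_rightInvSeq] at hj
  refine ⟨j, hj, ?_⟩
  have := cs.wordProd_mul_getD_rightInvSeq ω j
  rw [List.getD_eq_getElem _ _ (by rw [cs.length_rightInvSeq]; exact hj)] at this
  rw [hget] at this
  exact this.symm

/-- Every word has a reduced subword-like replacement with the same product, using only
letters of the original word (deletion property). -/
lemma exists_reduced_subword (J : Set B) :
    ∀ n (ω : List B), ω.length ≤ n → (∀ i ∈ ω, i ∈ J) →
    ∃ ω' : List B, cs.IsReduced ω' ∧ cs.wordProd ω' = cs.wordProd ω ∧ ∀ i ∈ ω', i ∈ J := by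
  intro n
  induction n with
  | zero =>
    intro ω hlen _
    rw [Nat.le_zero, List.length_eq_zero_iff] at hlen
    subst hlen
    refine ⟨[], ?_, rfl, by simp⟩
    rw [CoxeterSystem.IsReduced]
    simp
  | succ n ih =>
    intro ω hlen hJ
    by_cases hred : cs.IsReduced ω
    · exact ⟨ω, hred, rfl, hJ⟩
    · classical
      have hex : ∃ k, ¬ cs.IsReduced (ω.take k) := ⟨ω.length, by rwa [List.take_length]⟩
      have hk0red := Nat.find_spec hex
      have hk0pos : Nat.find hex ≠ 0 := by
        intro h0
        rw [h0] at hk0red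
        apply hk0red
        rw [CoxeterSystem.IsReduced]
        simp
      obtain ⟨k, hk⟩ := Nat.exists_eq_succ_of_ne_zero hk0pos
      rw [hk] at hk0red
      have hkred : cs.IsReduced (ω.take k) := by
        by_contra hc
        exact Nat.find_min hex (by omega : k < Nat.find hex) hc
      have hklt : k < ω.length := by
        by_contra hc
        push_neg at hc
        apply hk0red
        rw [List.take_of_length_le (by omega)]
        rw [List.take_of_length_le hc] at hkred
        exact hkred
      have htake : ω.take (k + 1) = ω.take k ++ [ω.get ⟨k, hklt⟩] := by
        rw [List.take_succ]
        simp [List.getElem?_eq_getElem hklt]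
      set i := ω.get ⟨k, hklt⟩ with hi
      have hlentake : cs.length (cs.wordProd (ω.take k)) = k := by
        have := hkred
        rw [CoxeterSystem.IsReduced] at this
        rwa [List.length_take, min_eq_left (by omega)] at this
      have hdesc : cs.length (cs.wordProd (ω.take k) * cs.simple i)
          < cs.length (cs.wordProd (ω.take k)) := by
        rcases cs.length_mul_simple (cs.wordProd (ω.take k)) i with heq | heq
        · exfalso
          apply hk0red
          rw [CoxeterSystem.IsReduced, htake, cs.wordProd_append, List.length_append,
            List.length_take, min_eq_left (by omega)]
          simp only [cs.wordProd_singleton, List.length_singleton]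
          rw [heq, hlentake]
        · omega
      obtain ⟨j, hj, hjprod⟩ := exchange cs hdesc
      set ω'' := ((ω.take k).eraseIdx j) ++ ω.drop (k + 1) with hω''
      have hprod'' : cs.wordProd ω'' = cs.wordProd ω := by
        rw [hω'', cs.wordProd_append, hjprod, ← cs.wordProd_singleton, ← cs.wordProd_append,
          ← cs.wordProd_append, List.append_assoc, ← List.append_assoc, ← htake,
          List.take_append_drop]
      have hlen'' : ω''.length ≤ n := by
        rw [hω'', List.length_append, List.length_eraseIdx]
        rw [List.length_take] at hj ⊢
        simp only [List.length_drop]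
        have : min k ω.length = k := min_eq_left (by omega)
        rw [this] at hj ⊢
        split <;> omega
      have hJ'' : ∀ l ∈ ω'', l ∈ J := by
        intro l hl
        rcases List.mem_append.mp hl with hl | hl
        · exact hJ l (List.mem_of_mem_take ((ω.take k).eraseIdx_sublist j |>.mem hl))
        · exact hJ l (List.mem_of_mem_drop hl)
      obtain ⟨ω', h1, h2, h3⟩ := ih ω'' hlen'' hJ''
      exact ⟨ω', h1, by rw [h2, hprod''], h3⟩

lemma exists_word_of_mem_closure (J : Set B) {w : W}
    (hw : w ∈ Subgroup.closure (cs.simple '' J)) :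
    ∃ ω : List B, (∀ i ∈ ω, i ∈ J) ∧ cs.wordProd ω = w := by
  induction hw using Subgroup.closure_induction with
  | mem g hg =>
    obtain ⟨i, hi, rfl⟩ := hg
    exact ⟨[i], by simpa using hi, cs.wordProd_singleton i⟩
  | one => exact ⟨[], by simp, cs.wordProd_nil⟩
  | mul g h _ _ ihg ihh =>
    obtain ⟨ω₁, h1, h2⟩ := ihg
    obtain ⟨ω₂, h3, h4⟩ := ihh
    exact ⟨ω₁ ++ ω₂, fun i hi => (List.mem_append.mp hi).elim (h1 i) (h3 i),
      by rw [cs.wordProd_append, h2, h4]⟩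
  | inv g _ ihg =>
    obtain ⟨ω, h1, h2⟩ := ihg
    exact ⟨ω.reverse, fun i hi => h1 i (List.mem_reverse.mp hi),
      by rw [cs.wordProd_reverse, h2]⟩

variable {A : Type*} [CommRing A]

lemma foldr_comp_cons (D : B → A → A) (i : B) (l : List B) (f : A) :
    (((i :: l).map D).foldr (· ∘ ·) id) f = D i (((l.map D).foldr (· ∘ ·) id) f) := rfl

lemma foldr_comp_append (D : B → A → A) (l₁ l₂ : List B) (f : A) :
    (((l₁ ++ l₂).map D).foldr (· ∘ ·) id) f
      = ((l₁.map D).foldr (· ∘ ·) id) (((l₂.map D).foldr (· ∘ ·) id) f) := by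
  induction l₁ with
  | nil => rfl
  | cons i l ih => rw [List.cons_append, foldr_comp_cons, foldr_comp_cons, ih]

lemma foldr_comp_zero (D : B → A → A) (hD : ∀ i, D i 0 = 0) (l : List B) :
    ((l.map D).foldr (· ∘ ·) id) (0 : A) = 0 := by
  induction l with
  | nil => rfl
  | cons i l ih => rw [foldr_comp_cons, ih, hD]

end SchubertAux

/-- Sparsity of Schubert structure constants (Lemma on parabolic factorizations), stated
for the Hiller/BGG–Demazure Schubert calculus of a finite Coxeter group `W` acting on a
polynomial algebra `A` over a field `k` of characteristic zero.  The data consists of the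
action `act` of `W` on `A`, the Schubert polynomials `S w`, the divided difference
operators `D s` for simple reflections, and their compositions `Dw u`; the hypotheses
record the defining properties: the Leibniz rule, `D s f = 0 ↔ s(f) = f`,
`D s (S w) = S (w s)` if `s` is a descent of `w` and `0` otherwise, `Dw` is the
composition of the `D s` along any reduced word, and `Dw w' (S w) = δ_{w,w'}` for
`ℓ(w) = ℓ(w')`.

Claim: if `w = u·x` and `w' = u·x'` are length-additive parabolic factorizations with
`u ∈ W^J`, `x, x' ∈ W_J` and `ℓ(x') = ℓ(x)`, then the structure constant
`c^{w'}_{u,x} = ∂_{w'}(S_u S_x)` equals `δ_{x,x'}` (equivalently `δ_{w,w'}`). -/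
theorem schubert_structure_constant_sparsity
    {B W : Type*} [Group W] [Finite W] [DecidableEq W] {M : CoxeterMatrix B} (cs : CoxeterSystem M W)
    {k A : Type*} [Field k] [CharZero k] [CommRing A] [Algebra k A]
    (act : W →* (A ≃ₐ[k] A))
    (S : W → A) (D : B → A → A) (Dw : W → A → A)
    (hLeib : ∀ (s : B) (f g : A),
      D s (f * g) = D s f * g + act (cs.simple s) f * D s g)
    (hker : ∀ (s : B) (f : A), D s f = 0 ↔ act (cs.simple s) f = f)
    (hDS : ∀ (s : B) (w : W), D s (S w) =
      if cs.length (w * cs.simple s) < cs.length w then S (w * cs.simple s) else 0)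
    (hDw : ∀ l : List B, cs.IsReduced l → Dw (cs.wordProd l) = (l.map D).foldr (· ∘ ·) id)
    (hdual : ∀ w w' : W, cs.length w = cs.length w' →
      Dw w' (S w) = if w = w' then 1 else 0)
    (J : Set B) (u x x' : W)
    (hu : ∀ i ∈ J, ¬ cs.length (u * cs.simple i) < cs.length u)
    (hx : x ∈ Subgroup.closure (cs.simple '' J))
    (hx' : x' ∈ Subgroup.closure (cs.simple '' J))
    (hadd : cs.length (u * x) = cs.length u + cs.length x)
    (hadd' : cs.length (u * x') = cs.length u + cs.length x')
    (hlen : cs.length x' = cs.length x) :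
    Dw (u * x') (S u * S x) = if x = x' then 1 else 0 := by
  classical
  obtain ⟨lu, hlu_red, hlu⟩ := cs.exists_reduced_word' u
  obtain ⟨ω, hωJ, hωprod⟩ := SchubertAux.exists_word_of_mem_closure cs J hx'
  obtain ⟨lx, hlx_red, hlx_prod, hlxJ⟩ :=
    SchubertAux.exists_reduced_subword cs J ω.length ω le_rfl hωJ
  have hlx : cs.wordProd lx = x' := by rw [hlx_prod, hωprod]
  have hlu' : cs.wordProd lu = u := hlu.symm
  have hul : cs.length u = lu.length := by rw [← hlu']; exact hlu_red
  have hxl : cs.length x' = lx.length := by rw [← hlx]; exact hlx_red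
  have hcat : cs.IsReduced (lu ++ lx) := by
    rw [CoxeterSystem.IsReduced, cs.wordProd_append, hlu', hlx, List.length_append, hadd',
      hul, hxl]
  have hprodcat : cs.wordProd (lu ++ lx) = u * x' := by rw [cs.wordProd_append, hlu', hlx]
  have hDweq : Dw (u * x') = ((lu ++ lx).map D).foldr (· ∘ ·) id := by
    rw [← hprodcat]; exact hDw _ hcat
  rw [hDweq, SchubertAux.foldr_comp_append]
  have hDzero : ∀ i ∈ J, D i (S u) = 0 := fun i hi => by rw [hDS]; exact if_neg (hu i hi)
  have hcomm : ∀ l : List B, (∀ i ∈ l, i ∈ J) → ∀ f : A,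
      ((l.map D).foldr (· ∘ ·) id) (S u * f) = S u * ((l.map D).foldr (· ∘ ·) id) f := by
    intro l
    induction l with
    | nil => intro _ f; rfl
    | cons i l ih =>
      intro hl f
      have hiJ : i ∈ J := hl i (List.mem_cons_self (a := i) (l := l))
      rw [SchubertAux.foldr_comp_cons, SchubertAux.foldr_comp_cons,
        ih (fun j hj => hl j (List.mem_cons_of_mem i hj)) f, hLeib,
        hDzero i hiJ, (hker i (S u)).mp (hDzero i hiJ), zero_mul, zero_add]
  rw [hcomm lx hlxJ (S x)]
  have hinner : ((lx.map D).foldr (· ∘ ·) id) (S x) = if x = x' then 1 else 0 := by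
    rw [← hDw lx hlx_red, hlx, hdual x x' hlen.symm]
  rw [hinner]
  by_cases hxx : x = x'
  · rw [if_pos hxx, mul_one, ← hDw lu hlu_red, hlu', hdual u u rfl, if_pos rfl]
  · rw [if_neg hxx, mul_zero,
      SchubertAux.foldr_comp_zero D (fun i => (hker i 0).mpr (map_zero _)) lu]
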